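/- arXiv:2507.02486 — 2 statements merged into one kernel-verified Lean document; each statement's English description precedes it below -/
import Mathlib

section
/- Fix N ≥ 1 and constants η, η' with η/√N > η' > 1. For k ∈ ℤ, let ℱ_k be the family of closed dyadic cubes [0, 2^{−k}]^N + m·2^{−k} with m ∈ ℤ^N, and for Q ∈ ℱ_{k+1} let Q̃ ∈ ℱ_k denote its dyadic parent. For a cube Q = Q(x, s) and σ > 0, write Q_σ := Q(x, σs) for the concentric dilate. Let Ω ⊂ ℝ^N be an open domain with ∂Ω ≠ ∅ and let 𝒬 be the set of dyadic cubes Q such that Q_η ⊂ Ω and Q̃_η ⊄ Ω. Then Ω = ⋃_{Q ∈ 𝒬} Q. -/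
open MeasureTheory Real Metric
open scoped ENNReal NNReal

noncomputable section

/-- `cube x s` is the closed cube of center `x` and side `s`, i.e. the closed
`ℓ^∞`-ball of radius `s/2` around `x`. -/
def cube {N : ℕ} (x : EuclideanSpace ℝ (Fin N)) (s : ℝ) : Set (EuclideanSpace ℝ (Fin N)) :=
  {y | ∀ i, |y i - x i| ≤ s / 2}

/-- Center of the dyadic cube `[0, 2^{-k}]^N + m·2^{-k}` of generation `k ∈ ℤ`. -/
def dyCenter (N : ℕ) (k : ℤ) (m : Fin N → ℤ) : EuclideanSpace ℝ (Fin N) :=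
  WithLp.toLp 2 (fun i => ((m i : ℝ) + 1 / 2) * (2 : ℝ) ^ (-k))

/-- Side length `2^{-k}` of a dyadic cube of generation `k`. -/
def dySide (k : ℤ) : ℝ := (2 : ℝ) ^ (-k)

/-- Index of the dyadic parent: the dyadic cube of generation `k` and index `m` is
contained in the unique dyadic cube of generation `k - 1` with index `fun i => ⌊m i / 2⌋`. -/
def dyParentIdx {N : ℕ} (m : Fin N → ℤ) : Fin N → ℤ := fun i => Int.fdiv (m i) 2

/-- The dyadic cube of generation `k` and index `m` belongs to the Whitney family `𝒬`
for `Ω` (with dilation parameter `η`): its dilate `Q_η` is contained in `Ω`, while the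
dilate `Q̃_η` of its dyadic parent is not. -/
def memQcal {N : ℕ} (Ω : Set (EuclideanSpace ℝ (Fin N))) (η : ℝ) (k : ℤ) (m : Fin N → ℤ) :
    Prop :=
  cube (dyCenter N k m) (η * dySide k) ⊆ Ω ∧
  ¬ cube (dyCenter N (k - 1) (dyParentIdx m)) (η * dySide (k - 1)) ⊆ Ω

/-- floor of half a real equals floor-division of the floor by 2 -/
lemma floor_half_eq_fdiv (a : ℝ) : ⌊a / 2⌋ = (⌊a⌋).fdiv 2 := by
  rw [Int.fdiv_eq_ediv_of_nonneg _ (by norm_num)]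
  have h1 : (⌊a⌋ : ℝ) ≤ a := Int.floor_le a
  have h2 : a < ⌊a⌋ + 1 := Int.lt_floor_add_one a
  have hdm : 2 * (⌊a⌋ / 2) + ⌊a⌋ % 2 = ⌊a⌋ := Int.mul_ediv_add_emod _ _
  have hm0 : 0 ≤ ⌊a⌋ % 2 := Int.emod_nonneg _ (by norm_num)
  have hm1 : ⌊a⌋ % 2 < 2 := Int.emod_lt_of_pos _ (by norm_num)
  rw [Int.floor_eq_iff]
  constructor
  · have : ((2 * (⌊a⌋ / 2) : ℤ) : ℝ) ≤ (⌊a⌋ : ℝ) := by exact_mod_cast by omega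
    push_cast at this ⊢
    linarith
  · have : ((⌊a⌋ : ℤ) : ℝ) + 1 ≤ ((2 * (⌊a⌋ / 2) + 2 : ℤ) : ℝ) := by exact_mod_cast by omega
    push_cast at this ⊢
    linarith

lemma coord_le_norm {N : ℕ} (v : EuclideanSpace ℝ (Fin N)) (i : Fin N) : |v i| ≤ ‖v‖ := by
  rw [EuclideanSpace.norm_eq]
  have h : |v i| = Real.sqrt (‖v i‖ ^ 2) := by
    rw [Real.norm_eq_abs, Real.sqrt_sq (abs_nonneg _)]
  rw [h]
  apply Real.sqrt_le_sqrt
  exact Finset.single_le_sum (f := fun j => ‖v j‖ ^ 2) (fun j _ => by positivity)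
    (Finset.mem_univ i)

lemma norm_le_sqrt_mul {N : ℕ} (v : EuclideanSpace ℝ (Fin N)) (M : ℝ) (hM : 0 ≤ M)
    (h : ∀ i, |v i| ≤ M) : ‖v‖ ≤ Real.sqrt N * M := by
  rw [EuclideanSpace.norm_eq]
  have hsum : ∑ i, ‖v i‖ ^ 2 ≤ (N : ℝ) * M ^ 2 := by
    calc ∑ i, ‖v i‖ ^ 2 ≤ ∑ _i : Fin N, M ^ 2 := by
          apply Finset.sum_le_sum
          intro j _
          rw [Real.norm_eq_abs]
          exact pow_le_pow_left₀ (abs_nonneg _) (h j) 2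
      _ = (N : ℝ) * M ^ 2 := by simp [Finset.sum_const, mul_comm]
  calc Real.sqrt (∑ i, ‖v i‖ ^ 2) ≤ Real.sqrt ((N : ℝ) * M ^ 2) := Real.sqrt_le_sqrt hsum
    _ = Real.sqrt N * M := by
        rw [Real.sqrt_mul (by positivity), Real.sqrt_sq hM]

lemma exists_first_passage (P : ℤ → Prop) (k0 k1 : ℤ) (h01 : k0 ≤ k1) (h1 : P k1)
    (h0 : ¬ P k0) : ∃ k, P k ∧ ¬ P (k - 1) := by
  by_contra h
  push_neg at h
  have key : ∀ n : ℕ, P (k1 - n) := by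
    intro n
    induction n with
    | zero => simpa using h1
    | succ n ih =>
        have := h _ ih
        have he : k1 - (n : ℤ) - 1 = k1 - ((n : ℕ) + 1 : ℕ) := by push_cast; ring
        rwa [he] at this
  have hk := key (k1 - k0).toNat
  rw [Int.toNat_of_nonneg (by omega)] at hk
  have : k1 - (k1 - k0) = k0 := by ring
  rw [this] at hk
  exact h0 hk

/-- **Lemma 7.** Fix `N ≥ 1` and constants `η, η'` with `η/√N > η' > 1`, and let
`Ω ⊂ ℝ^N` be an open domain with `∂Ω ≠ ∅`.  Then `Ω` is the union of the cubes of the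
Whitney family `𝒬 = {Q dyadic : Q_η ⊆ Ω and Q̃_η ⊄ Ω}`. -/
theorem union_whitney_cubes (N : ℕ) (hN : 1 ≤ N) (η η' : ℝ)
    (hη'1 : 1 < η') (hηη' : η' < η / Real.sqrt N)
    (Ω : Set (EuclideanSpace ℝ (Fin N))) (hΩ : IsOpen Ω) (hfr : (frontier Ω).Nonempty) :
    Ω = ⋃ (k : ℤ) (m : Fin N → ℤ) (_ : memQcal Ω η k m), cube (dyCenter N k m) (dySide k) := by
  have hsN1 : (1 : ℝ) ≤ Real.sqrt N := Real.one_le_sqrt.mpr (by exact_mod_cast hN)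
  have hsN0 : (0 : ℝ) < Real.sqrt N := by linarith
  have hη1 : (1 : ℝ) < η := by
    have : η' * Real.sqrt N < η := by
      rw [div_eq_mul_inv] at hηη'
      calc η' * Real.sqrt N < η * (Real.sqrt N)⁻¹ * Real.sqrt N := by
            apply mul_lt_mul_of_pos_right hηη' hsN0
        _ = η := by field_simp
    nlinarith
  have hpow : ∀ k : ℤ, (0 : ℝ) < (2 : ℝ) ^ (-k) := fun k => zpow_pos (by norm_num) _
  apply Set.Subset.antisymm
  · -- Ω ⊆ union
    intro x hx
    -- index of the dyadic cube of generation k containing x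
    set m_ : ℤ → Fin N → ℤ := fun k i => ⌊x i * (2 : ℝ) ^ k⌋ with hm_
    -- x is within dySide k / 2 of the center of its cube
    have hxc : ∀ (k : ℤ) (i : Fin N),
        |x i - dyCenter N k (m_ k) i| ≤ dySide k / 2 := by
      intro k i
      simp only [dyCenter, dySide, hm_]
      set t := x i * (2 : ℝ) ^ k with ht
      have h1 : (⌊t⌋ : ℝ) ≤ t := Int.floor_le t
      have h2 : t < ⌊t⌋ + 1 := Int.lt_floor_add_one t
      have hcancel : (2 : ℝ) ^ k * (2 : ℝ) ^ (-k) = 1 := by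
        rw [← zpow_add₀ (two_ne_zero)]; simp
      have hx' : x i = t * (2 : ℝ) ^ (-k) := by
        rw [ht, mul_assoc, hcancel, mul_one]
      have heq : x i - ((⌊t⌋ : ℝ) + 1 / 2) * (2 : ℝ) ^ (-k)
          = (t - ((⌊t⌋ : ℝ) + 1 / 2)) * (2 : ℝ) ^ (-k) := by
        rw [hx']; ring
      rw [heq, abs_mul, abs_of_pos (hpow k)]
      have habs : |t - ((⌊t⌋ : ℝ) + 1 / 2)| ≤ 1 / 2 := by
        rw [abs_le]; constructor <;> linarith
      have := mul_le_mul_of_nonneg_right habs (le_of_lt (hpow k))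
      linarith
    -- the parent of the cube of generation k is the cube of generation k-1
    have hparent : ∀ k : ℤ, dyParentIdx (m_ k) = m_ (k - 1) := by
      intro k
      funext i
      simp only [dyParentIdx, hm_]
      rw [← floor_half_eq_fdiv]
      congr 1
      rw [zpow_sub₀ (two_ne_zero)]
      field_simp
    set P : ℤ → Prop := fun k => cube (dyCenter N k (m_ k)) (η * dySide k) ⊆ Ω with hP
    -- P holds for k large
    obtain ⟨ε, hε, hball⟩ := Metric.isOpen_iff.mp hΩ x hx
    obtain ⟨n1, hn1⟩ : ∃ n : ℕ, ((1 : ℝ) / 2) ^ n < 2 * ε / (Real.sqrt N * (η + 1)) := by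
      apply exists_pow_lt_of_lt_one
      · positivity
      · norm_num
    have hsmall : ((2 : ℝ)) ^ (-(n1 : ℤ)) < 2 * ε / (Real.sqrt N * (η + 1)) := by
      have he : ((2 : ℝ)) ^ (-(n1 : ℤ)) = ((1 : ℝ) / 2) ^ n1 := by
        rw [zpow_neg, zpow_natCast, one_div, inv_pow]
      rw [he]; exact hn1
    have hPk1 : P (n1 : ℤ) := by
      intro y hy
      apply hball
      rw [Metric.mem_ball, dist_eq_norm]
      have hcoord : ∀ i, |(y - x) i| ≤ (η + 1) * (2 : ℝ) ^ (-(n1 : ℤ)) / 2 := by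
        intro i
        rw [PiLp.sub_apply]
        have h1 := hy i
        have h2 := hxc (n1 : ℤ) i
        simp only [dySide] at h1 h2
        calc |y i - x i| ≤ |y i - dyCenter N n1 (m_ n1) i|
              + |x i - dyCenter N n1 (m_ n1) i| := by
              have := abs_sub_abs_le_abs_sub (y i) (x i)
              have h3 : y i - x i = (y i - dyCenter N n1 (m_ n1) i)
                  - (x i - dyCenter N n1 (m_ n1) i) := by ring
              rw [h3]
              exact abs_sub (y i - dyCenter N n1 (m_ n1) i) (x i - dyCenter N n1 (m_ n1) i)
          _ ≤ η * (2 : ℝ) ^ (-(n1 : ℤ)) / 2 + (2 : ℝ) ^ (-(n1 : ℤ)) / 2 := by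
              exact add_le_add h1 h2
          _ = (η + 1) * (2 : ℝ) ^ (-(n1 : ℤ)) / 2 := by ring
      have hnorm := norm_le_sqrt_mul (y - x) _ (by positivity) hcoord
      calc ‖y - x‖ ≤ Real.sqrt N * ((η + 1) * (2 : ℝ) ^ (-(n1 : ℤ)) / 2) := hnorm
        _ < ε := by
            rw [lt_div_iff₀ (by positivity)] at hsmall
            nlinarith
    -- ¬ P holds for k very negative
    obtain ⟨z, hz⟩ := hfr
    have hzΩ : z ∉ Ω := by
      rw [hΩ.frontier_eq] at hz
      exact hz.2
    obtain ⟨n0, hn0⟩ : ∃ n : ℕ, 2 * ‖z - x‖ / (η - 1) < 2 ^ n :=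
      pow_unbounded_of_one_lt _ (by norm_num)
    set k0 : ℤ := min (n1 : ℤ) (-(n0 : ℤ)) with hk0
    have hbig : 2 * ‖z - x‖ / (η - 1) < (2 : ℝ) ^ (-k0) := by
      calc 2 * ‖z - x‖ / (η - 1) < 2 ^ n0 := hn0
        _ = (2 : ℝ) ^ ((n0 : ℤ)) := by rw [zpow_natCast]
        _ ≤ (2 : ℝ) ^ (-k0) := by
            apply zpow_le_zpow_right₀ (by norm_num)
            omega
    have hPk0 : ¬ P k0 := by
      intro hsub
      apply hzΩ
      apply hsub
      intro i
      have h1 : |z i - x i| ≤ ‖z - x‖ := by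
        have := coord_le_norm (z - x) i
        rwa [PiLp.sub_apply] at this
      have h2 := hxc k0 i
      simp only [dySide] at h2 ⊢
      have hd : ‖z - x‖ ≤ (η - 1) * (2 : ℝ) ^ (-k0) / 2 := by
        rw [div_lt_iff₀ (by linarith)] at hbig
        nlinarith [hpow k0]
      calc |z i - dyCenter N k0 (m_ k0) i|
          ≤ |z i - x i| + |x i - dyCenter N k0 (m_ k0) i| := by
            have h3 : z i - dyCenter N k0 (m_ k0) i
                = (z i - x i) + (x i - dyCenter N k0 (m_ k0) i) := by ring
            rw [h3]
            exact abs_add_le _ _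
        _ ≤ (η - 1) * (2 : ℝ) ^ (-k0) / 2 + (2 : ℝ) ^ (-k0) / 2 := by
            refine add_le_add (le_trans h1 hd) h2
        _ = η * (2 : ℝ) ^ (-k0) / 2 := by ring
    -- first passage
    obtain ⟨k, hk, hk'⟩ := exists_first_passage P k0 (n1 : ℤ) (by omega) hPk1 hPk0
    simp only [Set.mem_iUnion]
    refine ⟨k, m_ k, ⟨hk, ?_⟩, fun i => hxc k i⟩
    rw [hparent k]
    exact hk'
  · -- union ⊆ Ω
    intro y hy
    simp only [Set.mem_iUnion] at hy
    obtain ⟨k, m, hQ, hyQ⟩ := hy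
    apply hQ.1
    intro i
    have := hyQ i
    have hs : (0 : ℝ) < dySide k := hpow k
    calc |y i - dyCenter N k m i| ≤ dySide k / 2 := this
      _ ≤ η * dySide k / 2 := by nlinarith

end
end

section
/- Fix N ≥ 1 and constants η, η' with η/√N > η' > 1, and let Ω ⊂ ℝ^N be an open domain with ∂Ω ≠ ∅. Let 𝒬 be the set of dyadic cubes Q with Q_η ⊂ Ω and Q̃_η ⊄ Ω (Q̃ the dyadic parent of Q). Then, with c₆ := √N (2η + 1 + η')/(η − η'√N), the following holds: if Q(x, s) and Q'(x', s') belong to 𝒬, the dilated cubes Q(x, η's) and Q'(x', η's') intersect, and s < s', then s < s' < c₆ s. -/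
open MeasureTheory Real Metric
open scoped ENNReal NNReal

noncomputable section

/-- **Lemma 9, first part.** Fix `N ≥ 1` and constants `η, η'` with `η/√N > η' > 1`, and
let `Ω ⊂ ℝ^N` be an open domain with `∂Ω ≠ ∅`.  Set
`c₆ = √N (2η + 1 + η')/(η − η'√N)`.  If `Q(x, s)` and `Q'(x', s')` belong to the Whitney
family `𝒬`, their dilates `Q(x, η's)` and `Q'(x', η's')` intersect, and `s < s'`, then
`s < s' < c₆ s`. -/
theorem whitney_cube_sides_comparable (N : ℕ) (hN : 1 ≤ N) (η η' : ℝ)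
    (hη'1 : 1 < η') (hηη' : η' < η / Real.sqrt N)
    (Ω : Set (EuclideanSpace ℝ (Fin N))) (hΩ : IsOpen Ω) (hfr : (frontier Ω).Nonempty)
    (k k' : ℤ) (m m' : Fin N → ℤ)
    (hQ : memQcal Ω η k m) (hQ' : memQcal Ω η k' m')
    (hmeet : (cube (dyCenter N k m) (η' * dySide k) ∩
      cube (dyCenter N k' m') (η' * dySide k')).Nonempty)
    (hss' : dySide k < dySide k') :
    dySide k' < (Real.sqrt N * (2 * η + 1 + η') / (η - η' * Real.sqrt N)) * dySide k := by
  obtain ⟨y, hy, hy'⟩ := hmeet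
  obtain ⟨z, hz, hzΩ⟩ := Set.not_subset.mp hQ.2
  have hzQ' : z ∉ cube (dyCenter N k' m') (η * dySide k') := fun h => hzΩ (hQ'.1 h)
  simp only [cube, Set.mem_setOf_eq, not_forall, not_le] at hzQ'
  obtain ⟨i, hi⟩ := hzQ'
  simp only [cube, Set.mem_setOf_eq] at hz hy hy'
  have hs : 0 < dySide k := zpow_pos (by norm_num) _
  have hs' : 0 < dySide k' := zpow_pos (by norm_num) _
  have hN1 : (1 : ℝ) ≤ Real.sqrt N := by
    rw [Real.one_le_sqrt]
    exact_mod_cast hN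
  have hη'0 : (0 : ℝ) < η' := lt_trans one_pos hη'1
  have hsqrtpos : (0 : ℝ) < Real.sqrt N := lt_of_lt_of_le one_pos hN1
  have hηN : η' * Real.sqrt N < η := (lt_div_iff₀ hsqrtpos).mp hηη'
  have hη'η : η' < η := by nlinarith
  have hp : dySide (k - 1) = 2 * dySide k := by
    simp only [dySide]
    rw [show -(k - 1) = 1 + -k by ring, zpow_add₀ (by norm_num : (2:ℝ) ≠ 0), zpow_one]
  -- distance between parent center and center
  have h2q : (2 : ℤ) * ((m i).fdiv 2) + (m i) % 2 = m i := by
    rw [Int.fdiv_eq_ediv_of_nonneg _ (by norm_num)]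
    exact Int.mul_ediv_add_emod _ _
  have h2qr : (2 : ℝ) * ((m i).fdiv 2 : ℝ) + ((m i) % 2 : ℤ) = (m i : ℝ) := by
    exact_mod_cast congrArg (Int.cast : ℤ → ℝ) h2q
  have hdiff : dyCenter N (k - 1) (dyParentIdx m) i - dyCenter N k m i
      = (1 / 2 - (((m i) % 2 : ℤ) : ℝ)) * dySide k := by
    simp only [dyCenter, dyParentIdx, dySide]
    rw [show -(k - 1) = 1 + -k by ring, zpow_add₀ (by norm_num : (2:ℝ) ≠ 0), zpow_one]
    linear_combination ((2:ℝ) ^ (-k)) * h2qr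
  have hcenter : |dyCenter N (k - 1) (dyParentIdx m) i - dyCenter N k m i| ≤ dySide k / 2 := by
    rw [hdiff, abs_mul, abs_of_pos hs]
    rcases Int.emod_two_eq_zero_or_one (m i) with h | h <;> rw [h] <;> norm_num <;>
      linarith
  have hz_i := hz i
  rw [hp] at hz_i
  have hy_i := hy i
  have hy'_i := hy' i
  have htri : |z i - dyCenter N k' m' i| ≤
      |z i - dyCenter N (k - 1) (dyParentIdx m) i|
      + |dyCenter N (k - 1) (dyParentIdx m) i - dyCenter N k m i|
      + |y i - dyCenter N k m i| + |y i - dyCenter N k' m' i| := by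
    have h1 := abs_sub_le (z i) (dyCenter N (k - 1) (dyParentIdx m) i) (dyCenter N k' m' i)
    have h2 := abs_sub_le (dyCenter N (k - 1) (dyParentIdx m) i) (dyCenter N k m i)
      (dyCenter N k' m' i)
    have h3 := abs_sub_le (dyCenter N k m i) (y i) (dyCenter N k' m' i)
    have h4 : |dyCenter N k m i - y i| = |y i - dyCenter N k m i| := abs_sub_comm _ _
    linarith
  have H : η * dySide k' / 2 < η * (2 * dySide k) / 2 + dySide k / 2
      + η' * dySide k / 2 + η' * dySide k' / 2 := by
    calc η * dySide k' / 2 < |z i - dyCenter N k' m' i| := hi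
    _ ≤ _ := htri
    _ ≤ _ := by linarith
  have hA : (0 : ℝ) < 2 * η + 1 + η' := by nlinarith
  rw [div_mul_eq_mul_div, lt_div_iff₀ (by linarith : (0:ℝ) < η - η' * Real.sqrt N)]
  have h4 : 0 ≤ dySide k' * (η' * Real.sqrt N - η') := by
    apply mul_nonneg hs'.le
    nlinarith
  have h5 : 0 ≤ (Real.sqrt N - 1) * ((2 * η + 1 + η') * dySide k) :=
    mul_nonneg (by linarith) (mul_nonneg hA.le hs.le)
  nlinarith [H, h4, h5]
end
end
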